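/- For 0 < t ≤ c and a positive integer n, the integral ∫₀^∞ max(c·e^{−s^{1/n}} − t, 0) ds equals c·n! − t·n!·∑_{j=0}^{n} (1/j!)·(ln(c/t))^j, which also equals t·n!·∑_{j=n+1}^{∞} (1/j!)·(ln(c/t))^j. -/

import Mathlib

open MeasureTheory Real Finset
open scoped BigOperators Nat

noncomputable section

/-- `x` is majorized by `y`: equal total sums, and each top-`k` partial sum of
`x` (expressed order-free: any sum of `x` over a `k`-element subset) is bounded
by the top-`k` partial sum of `y` (the max over `k`-element subsets). -/
def IsMajorized {d : ℕ} (x y : Fin d → ℝ) : Prop :=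
  (∑ i, x i = ∑ i, y i) ∧
    ∀ A : Finset (Fin d), ∃ B : Finset (Fin d),
      B.card = A.card ∧ ∑ i ∈ A, x i ≤ ∑ i ∈ B, y i

/-- A probability vector: nonnegative entries summing to `1`. -/
def IsProbVec {d : ℕ} (x : Fin d → ℝ) : Prop := (∀ i, 0 ≤ x i) ∧ ∑ i, x i = 1

/-- Tensor product of vectors: components `x i * z j`. -/
def tens {d l : ℕ} (x : Fin d → ℝ) (z : Fin l → ℝ) : Fin (d * l) → ℝ :=
  fun k => x (finProdFinEquiv.symm k).1 * z (finProdFinEquiv.symm k).2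

/-- Catalytic majorization: some finite-dimensional probability vector `z`
satisfies `x ⊗ z ≺ y ⊗ z`. -/
def CatMaj {d : ℕ} (x y : Fin d → ℝ) : Prop :=
  ∃ (l : ℕ) (z : Fin l → ℝ), IsProbVec z ∧ IsMajorized (tens x z) (tens y z)


lemma auxDeriv (k : ℕ) (u : ℝ) :
    HasDerivAt (fun u : ℝ => -Real.exp (-u) * ∑ j ∈ Finset.range (k+1), ((k ! : ℝ)/(j ! : ℝ)) * u ^ j)
      (u ^ k * Real.exp (-u)) u := by
  have hP : HasDerivAt (fun u : ℝ => ∑ j ∈ Finset.range (k+1), ((k ! : ℝ)/(j ! : ℝ)) * u ^ j)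
      (∑ j ∈ Finset.range k, ((k ! : ℝ)/(j ! : ℝ)) * u ^ j) u := by
    have h1 : HasDerivAt (fun u : ℝ => ∑ j ∈ Finset.range (k+1), ((k ! : ℝ)/(j ! : ℝ)) * u ^ j)
        (∑ j ∈ Finset.range (k+1), ((k ! : ℝ)/(j ! : ℝ)) * ((j : ℝ) * u ^ (j-1))) u :=
      HasDerivAt.fun_sum fun j _ => (hasDerivAt_pow j u).const_mul _
    convert h1 using 1
    rw [Finset.sum_range_succ']
    simp only [Nat.cast_zero, zero_mul, mul_zero, add_zero]
    refine Finset.sum_congr rfl fun j _ => ?_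
    have hj : ((j+1)! : ℝ) = (j+1) * (j ! : ℝ) := by
      rw [Nat.factorial_succ]; push_cast; ring
    have hj0 : (j ! : ℝ) ≠ 0 := by positivity
    have hj1 : ((j+1)! : ℝ) ≠ 0 := by positivity
    simp only [Nat.add_sub_cancel]
    rw [hj]
    push_cast
    field_simp
  have he : HasDerivAt (fun u : ℝ => -Real.exp (-u)) (Real.exp (-u)) u := by
    have h2 := (Real.hasDerivAt_exp (-u)).comp u ((hasDerivAt_id u).neg)
    simpa [Function.comp_def, Pi.neg_def] using h2.neg
  have := he.mul hP
  refine HasDerivAt.congr_deriv this ?_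
  rw [Finset.sum_range_succ]
  have hk : (k ! : ℝ) / (k ! : ℝ) = 1 := div_self (by positivity)
  rw [hk]
  ring

lemma auxInt (k : ℕ) (x : ℝ) :
    ∫ u in (0:ℝ)..x, u ^ k * Real.exp (-u)
      = (k ! : ℝ) - Real.exp (-x) * ∑ j ∈ Finset.range (k+1), ((k ! : ℝ)/(j ! : ℝ)) * x ^ j := by
  have h := intervalIntegral.integral_eq_sub_of_hasDerivAt
    (f := fun u : ℝ => -Real.exp (-u) * ∑ j ∈ Finset.range (k+1), ((k ! : ℝ)/(j ! : ℝ)) * u ^ j)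
    (a := 0) (b := x) (fun u _ => auxDeriv k u)
    (Continuous.intervalIntegrable (by continuity) 0 x)
  rw [h]
  have h0 : ∑ j ∈ Finset.range (k+1), ((k ! : ℝ)/(j ! : ℝ)) * (0:ℝ) ^ j = (k ! : ℝ) := by
    rw [Finset.sum_range_succ']
    simp [Nat.factorial]
  rw [h0]
  simp [Real.exp_zero]
  ring

lemma auxRpow {n : ℕ} (hn : 1 ≤ n) {x : ℝ} (hx : 0 ≤ x) :
    ((x ^ n : ℝ)) ^ ((n : ℝ)⁻¹) = x := by
  have hn0 : (n : ℝ) ≠ 0 := Nat.cast_ne_zero.mpr (by omega)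
  rw [← Real.rpow_natCast x n, ← Real.rpow_mul hx, mul_inv_cancel₀ hn0, Real.rpow_one]

lemma auxContG (n : ℕ) : Continuous (fun s : ℝ => Real.exp (-(s ^ ((n : ℝ)⁻¹)))) := by
  have h1 : Continuous (fun s : ℝ => s ^ ((n : ℝ)⁻¹)) :=
    Real.continuous_rpow_const (by positivity)
  exact Real.continuous_exp.comp h1.neg

lemma auxSubst {n : ℕ} (hn : 1 ≤ n) {L : ℝ} (hL : 0 ≤ L) :
    ∫ s in (0:ℝ)..(L ^ n), Real.exp (-(s ^ ((n : ℝ)⁻¹)))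
      = ∫ u in (0:ℝ)..L, (n : ℝ) * u ^ (n - 1) * Real.exp (-u) := by
  have key := intervalIntegral.integral_comp_smul_deriv
    (f := fun u : ℝ => u ^ n) (f' := fun u : ℝ => (n : ℝ) * u ^ (n - 1))
    (g := fun s : ℝ => Real.exp (-(s ^ ((n : ℝ)⁻¹)))) (a := 0) (b := L)
    (fun x _ => by simpa using hasDerivAt_pow n x)
    (by fun_prop) (auxContG n)
  simp only [] at key
  rw [zero_pow (show n ≠ 0 by omega)] at key
  rw [← key]
  refine intervalIntegral.integral_congr fun x hx => ?_
  have hx0 : 0 ≤ x := by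
    rw [Set.uIcc_of_le hL] at hx
    exact hx.1
  simp only [smul_eq_mul, Function.comp]
  rw [auxRpow hn hx0]

lemma mainVal (c t : ℝ) (n : ℕ) (hn : 1 ≤ n) (ht : 0 < t) (htc : t ≤ c) :
    (∫ s in Set.Ioi (0 : ℝ), max (c * Real.exp (-(s ^ ((n : ℝ)⁻¹))) - t) 0)
      = c * (n ! : ℝ) - t * (n ! : ℝ) *
          ∑ j ∈ Finset.range (n + 1), (1 / (j ! : ℝ)) * Real.log (c / t) ^ j := by
  set L := Real.log (c / t) with hLdef
  have hc : 0 < c := lt_of_lt_of_le ht htc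
  have hct : (1:ℝ) ≤ c / t := (one_le_div ht).mpr htc
  have hL : 0 ≤ L := Real.log_nonneg hct
  have hA : (0:ℝ) ≤ L ^ n := pow_nonneg hL n
  have hexpL : Real.exp (-L) = t / c := by
    rw [Real.exp_neg, Real.exp_log (by positivity), inv_div]
  have key : Set.EqOn (fun s => max (c * Real.exp (-(s ^ ((n : ℝ)⁻¹))) - t) 0)
      (Set.indicator (Set.Ioc 0 (L^n)) (fun s => c * Real.exp (-(s ^ ((n : ℝ)⁻¹))) - t))
      (Set.Ioi (0:ℝ)) := by
    intro s hs
    have hs0 : (0:ℝ) < s := hs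
    by_cases hsA : s ≤ L ^ n
    · have hmem : s ∈ Set.Ioc (0:ℝ) (L^n) := ⟨hs0, hsA⟩
      rw [Set.indicator_of_mem hmem]
      refine max_eq_left ?_
      have h1 : s ^ ((n:ℝ)⁻¹) ≤ L := by
        have h := Real.rpow_le_rpow (z := (n:ℝ)⁻¹) (le_of_lt hs0) hsA (by positivity)
        rwa [auxRpow hn hL] at h
      have h2 : t / c ≤ Real.exp (-(s ^ ((n:ℝ)⁻¹))) := by
        rw [← hexpL]
        exact Real.exp_le_exp.mpr (neg_le_neg h1)
      have h3 : t ≤ c * Real.exp (-(s ^ ((n:ℝ)⁻¹))) := by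
        calc t = c * (t / c) := by field_simp
        _ ≤ _ := mul_le_mul_of_nonneg_left h2 hc.le
      linarith
    · push_neg at hsA
      rw [Set.indicator_of_notMem (fun hmem => absurd hmem.2 (not_le.mpr hsA))]
      refine max_eq_right ?_
      have h1 : L < s ^ ((n:ℝ)⁻¹) := by
        have h := Real.rpow_lt_rpow (z := (n:ℝ)⁻¹) hA hsA (by positivity)
        rwa [auxRpow hn hL] at h
      have h2 : Real.exp (-(s ^ ((n:ℝ)⁻¹))) < t / c := by
        rw [← hexpL]
        exact Real.exp_lt_exp.mpr (neg_lt_neg h1)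
      have h3 : c * Real.exp (-(s ^ ((n:ℝ)⁻¹))) < t := by
        calc c * Real.exp (-(s ^ ((n:ℝ)⁻¹))) < c * (t / c) := mul_lt_mul_of_pos_left h2 hc
        _ = t := by field_simp
      linarith
  rw [MeasureTheory.setIntegral_congr_fun measurableSet_Ioi key,
    MeasureTheory.setIntegral_indicator measurableSet_Ioc,
    show Set.Ioi (0:ℝ) ∩ Set.Ioc 0 (L^n) = Set.Ioc 0 (L^n) from
      Set.inter_eq_right.mpr Set.Ioc_subset_Ioi_self,
    ← intervalIntegral.integral_of_le hA]
  have hcont : Continuous (fun s : ℝ => c * Real.exp (-(s ^ ((n : ℝ)⁻¹)))) :=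
    continuous_const.mul (auxContG n)
  rw [intervalIntegral.integral_sub (hcont.intervalIntegrable _ _)
    intervalIntegrable_const, intervalIntegral.integral_const_mul,
    intervalIntegral.integral_const, auxSubst hn hL]
  have hmul : (∫ u in (0:ℝ)..L, (n : ℝ) * u ^ (n - 1) * Real.exp (-u))
      = (n:ℝ) * ∫ u in (0:ℝ)..L, u ^ (n - 1) * Real.exp (-u) := by
    rw [← intervalIntegral.integral_const_mul]
    congr 1; ext u; ring
  rw [hmul, auxInt (n-1) L, show n - 1 + 1 = n from Nat.succ_pred_eq_of_pos hn, hexpL,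
    Finset.sum_range_succ]
  simp only [smul_eq_mul, sub_zero]
  set S' := ∑ j ∈ Finset.range n, (((n-1)! : ℝ)/(j ! : ℝ)) * L^j with hS'
  set S := ∑ j ∈ Finset.range n, (1/(j ! : ℝ)) * L^j with hS
  have hnfact : (n:ℝ) * ((n-1)! : ℝ) = (n ! : ℝ) := by
    rw [← Nat.cast_mul, Nat.mul_factorial_pred (by omega)]
  have e2 : (n:ℝ) * S' = (n ! : ℝ) * S := by
    rw [hS', hS, Finset.mul_sum, Finset.mul_sum]
    refine Finset.sum_congr rfl fun j _ => ?_
    rw [← hnfact]; ring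
  have h1 : c * (t/c) = t := by field_simp
  have h2 : t * (n ! : ℝ) * ((1/(n ! : ℝ)) * L^n) = t * L^n := by
    have h0 : (n ! : ℝ) ≠ 0 := by positivity
    field_simp
  linear_combination c * hnfact + h2 - ((n:ℝ) * S') * h1 - t * e2

/-- closed forms for `α(c,t,n) = ∫₀^∞ (c e^{-s^{1/n}} - t)⁺ ds`
when `0 < t ≤ c`. -/
theorem stmt9 (c t : ℝ) (n : ℕ) (hn : 1 ≤ n) (ht : 0 < t) (htc : t ≤ c) :
    (∫ s in Set.Ioi (0 : ℝ), max (c * Real.exp (-(s ^ ((n : ℝ)⁻¹))) - t) 0) =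
        c * (n ! : ℝ) - t * (n ! : ℝ) *
          ∑ j ∈ Finset.range (n + 1), (1 / (j ! : ℝ)) * Real.log (c / t) ^ j ∧
      (∫ s in Set.Ioi (0 : ℝ), max (c * Real.exp (-(s ^ ((n : ℝ)⁻¹))) - t) 0) =
        t * (n ! : ℝ) *
          ∑' j : ℕ, (1 / ((n + 1 + j)! : ℝ)) * Real.log (c / t) ^ (n + 1 + j) := by
  have hval := mainVal c t n hn ht htc
  refine ⟨hval, ?_⟩
  rw [hval]
  set L := Real.log (c / t) with hLdef
  have hc : 0 < c := lt_of_lt_of_le ht htc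
  have hsummable : Summable (fun j : ℕ => L ^ j / (j ! : ℝ)) :=
    Real.summable_pow_div_factorial L
  have hexp : (∑' j : ℕ, L ^ j / (j ! : ℝ)) = Real.exp L := by
    rw [Real.exp_eq_exp_ℝ, NormedSpace.exp_eq_tsum_div]
  have hsplit := Summable.sum_add_tsum_nat_add (f := fun j : ℕ => L ^ j / (j ! : ℝ)) (n+1) hsummable
  have htL : t * Real.exp L = c := by
    rw [hLdef, Real.exp_log (by positivity)]
    field_simp
  have hre : (∑' j : ℕ, (1 / (((n + 1 + j)!) : ℝ)) * L ^ (n + 1 + j))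
      = ∑' j : ℕ, L ^ (j + (n+1)) / ((j + (n+1))! : ℝ) := by
    refine tsum_congr fun j => ?_
    rw [show n + 1 + j = j + (n + 1) by omega]
    ring
  rw [hre]
  have hT : (∑' j : ℕ, L ^ (j + (n+1)) / ((j + (n+1))! : ℝ))
      = Real.exp L - ∑ j ∈ Finset.range (n+1), L ^ j / (j ! : ℝ) := by
    rw [← hexp, ← hsplit]; ring
  rw [hT]
  have hsum_eq : ∑ j ∈ Finset.range (n+1), (1/(j ! : ℝ)) * L ^ j
      = ∑ j ∈ Finset.range (n+1), L ^ j / (j ! : ℝ) :=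
    Finset.sum_congr rfl fun j _ => by ring
  rw [hsum_eq]
  linear_combination (-(n ! : ℝ)) * htL
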